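/- Let i, m0 : ℝ × ℝ → ℝ and m1 : ℝ × ℝ × ℝ → ℝ be continuous, fix t ∈ ℝ and a ≥ 0, and define M_{t,a}(y) := exp(-∫_0^y (m0(t-a+τ, τ) + i(t-a+τ, τ)) dτ) and Y_{t,a}(δ) := exp(-∫_0^δ (m1(t-δ+τ, a-δ+τ, τ) - i(t-δ+τ, a-δ+τ) - m0(t-δ+τ, a-δ+τ)) dτ). Then the prevalence-odds given by Keiding's formula equals a pseudo-convolution of the incidence with Y: (1 / M_{t,a}(a)) · ∫_0^a i(t-δ, a-δ) · M_{t,a}(a-δ) · exp(-∫_0^δ m1(t-δ+τ, a-δ+τ, τ) dτ) dδ = ∫_0^a i(t-δ, a-δ) · Y_{t,a}(δ) dδ. -/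

import Mathlib

/-- The prevalence-odds given by Keiding's formula equals a pseudo-convolution
of the incidence with the weight `Y`. -/
theorem keiding_odds_eq_pseudo_convolution
    (i m0 : ℝ × ℝ → ℝ) (m1 : ℝ × ℝ × ℝ → ℝ)
    (hi : Continuous i) (hm0 : Continuous m0) (hm1 : Continuous m1)
    (t a : ℝ) (ha : 0 ≤ a)
    (M : ℝ → ℝ)
    (hM : ∀ y, M y =
      Real.exp (-∫ τ in (0:ℝ)..y, (m0 (t - a + τ, τ) + i (t - a + τ, τ))))
    (Y : ℝ → ℝ)
    (hY : ∀ δ, Y δ =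
      Real.exp (-∫ τ in (0:ℝ)..δ,
        (m1 (t - δ + τ, a - δ + τ, τ) - i (t - δ + τ, a - δ + τ)
          - m0 (t - δ + τ, a - δ + τ)))) :
    (1 / M a) * ∫ δ in (0:ℝ)..a, i (t - δ, a - δ) * M (a - δ) *
        Real.exp (-∫ τ in (0:ℝ)..δ, m1 (t - δ + τ, a - δ + τ, τ)) =
      ∫ δ in (0:ℝ)..a, i (t - δ, a - δ) * Y δ := by
  set g : ℝ → ℝ := fun τ => m0 (t - a + τ, τ) + i (t - a + τ, τ) with hg
  have hgc : Continuous g := by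
    apply Continuous.add
    · exact hm0.comp (by fun_prop)
    · exact hi.comp (by fun_prop)
  have hMa : M a ≠ 0 := by
    rw [hM]; exact (Real.exp_pos _).ne'
  rw [← intervalIntegral.integral_const_mul]
  apply intervalIntegral.integral_congr
  intro δ _
  simp only
  have harg : ∀ τ : ℝ, t - a + (a - δ + τ) = t - δ + τ := by intro τ; ring
  have hm1c : Continuous fun τ : ℝ => m1 (t - δ + τ, a - δ + τ, τ) :=
    hm1.comp (by fun_prop)
  have hgsc : Continuous fun τ : ℝ => g (a - δ + τ) := hgc.comp (by fun_prop)
  have key : M (a - δ) * Real.exp (-∫ τ in (0:ℝ)..δ, m1 (t - δ + τ, a - δ + τ, τ))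
      = M a * Y δ := by
    rw [hM, hM, hY, ← Real.exp_add, ← Real.exp_add]
    congr 1
    have hsplit : (∫ τ in (0:ℝ)..a, g τ)
        = (∫ τ in (0:ℝ)..(a - δ), g τ) + ∫ τ in (a - δ)..a, g τ :=
      (intervalIntegral.integral_add_adjacent_intervals
        (hgc.intervalIntegrable _ _) (hgc.intervalIntegrable _ _)).symm
    have hshift : (∫ τ in (0:ℝ)..δ, g (a - δ + τ)) = ∫ τ in (a - δ)..a, g τ := by
      simp
    have hsub : (∫ τ in (0:ℝ)..δ,
        (m1 (t - δ + τ, a - δ + τ, τ) - i (t - δ + τ, a - δ + τ)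
          - m0 (t - δ + τ, a - δ + τ)))
        = (∫ τ in (0:ℝ)..δ, m1 (t - δ + τ, a - δ + τ, τ))
          - ∫ τ in (0:ℝ)..δ, g (a - δ + τ) := by
      rw [← intervalIntegral.integral_sub (hm1c.intervalIntegrable _ _)
        (hgsc.intervalIntegrable _ _)]
      apply intervalIntegral.integral_congr
      intro τ _
      simp only [hg, harg τ]
      ring
    linarith [hsplit, hshift, hsub]
  have hE : i (t - δ, a - δ) * M (a - δ) *
      Real.exp (-∫ τ in (0:ℝ)..δ, m1 (t - δ + τ, a - δ + τ, τ))
      = i (t - δ, a - δ) * (M a * Y δ) := by rw [← key]; ring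
  rw [hE]
  field_simp
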